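/- Assume G is invertible and set v = −C_z·G^{-1} ∈ ℝ^{1×m}. Define ϑ : ℝ → ℝ^{1×m} by ϑ(x) = [0, v]·exp(F·x)·[I_m; 0], i.e., the row vector consisting of the first m entries of [0, v]·exp(F·x). Then ϑ is twice differentiable and satisfies the kernel boundary value problem: q·ϑ''(x) = ϑ(x)·A_z for all x ∈ ℝ, ϑ(0) = 0, and ϑ(1) = −C_z. -/

import Mathlib

open scoped Matrix

/-- The block matrix `F = [[0, A_z/q],[I, 0]]`. -/
noncomputable def Fblock (m : ℕ) (q : ℝ) (Az : Matrix (Fin m) (Fin m) ℝ) :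
    Matrix (Fin m ⊕ Fin m) (Fin m ⊕ Fin m) ℝ :=
  Matrix.fromBlocks 0 (q⁻¹ • Az) 1 0

/-- `G = [0, I]·exp(F)·[I; 0]`, the lower-left `m×m` block of `exp F`. -/
noncomputable def Gblock (m : ℕ) (q : ℝ) (Az : Matrix (Fin m) (Fin m) ℝ) :
    Matrix (Fin m) (Fin m) ℝ :=
  (NormedSpace.exp (Fblock m q Az)).toBlocks₂₁

/-- `ϑ(x) = [0, v]·exp(F·x)·[I; 0]`, the first `m` entries of the row vector
`[0, v]·exp(F·x)`. -/
noncomputable def thetaKernel (m : ℕ) (q : ℝ) (Az : Matrix (Fin m) (Fin m) ℝ)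
    (v : Fin m → ℝ) (x : ℝ) : Fin m → ℝ :=
  fun j => (Sum.elim (0 : Fin m → ℝ) v ᵥ* NormedSpace.exp (x • Fblock m q Az)) (Sum.inl j)

/-- linear map `M ↦ (w ᵥ* M) ∘ inl`. -/
def rowMapAux (m : ℕ) (w : Fin m ⊕ Fin m → ℝ) :
    Matrix (Fin m ⊕ Fin m) (Fin m ⊕ Fin m) ℝ →ₗ[ℝ] (Fin m → ℝ) where
  toFun M := fun j => (w ᵥ* M) (Sum.inl j)
  map_add' M N := by
    funext j
    simp [Matrix.vecMul, dotProduct, Matrix.add_apply, Pi.add_apply, mul_add,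
      Finset.sum_add_distrib]
  map_smul' c M := by
    funext j
    simp [Matrix.vecMul, dotProduct, Matrix.smul_apply, Finset.mul_sum, mul_left_comm,
      mul_add]

lemma keyDeriv (m : ℕ) (F : Matrix (Fin m ⊕ Fin m) (Fin m ⊕ Fin m) ℝ)
    (T : Matrix (Fin m ⊕ Fin m) (Fin m ⊕ Fin m) ℝ →ₗ[ℝ] (Fin m → ℝ)) (x : ℝ) :
    HasDerivAt (fun t : ℝ => T (NormedSpace.exp (t • F)))
      (T (NormedSpace.exp (x • F) * F)) x := by
  letI := Matrix.linftyOpNormedRing (n := Fin m ⊕ Fin m) (α := ℝ)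
  letI := Matrix.linftyOpNormedAlgebra (n := Fin m ⊕ Fin m) (R := ℝ) (α := ℝ)
  have h := hasDerivAt_exp_smul_const (𝕂 := ℝ) F x
  exact ((LinearMap.toContinuousLinearMap T).hasFDerivAt).comp_hasDerivAt x h

/-- the explicit kernel `ϑ(x) = [0, −C_z G⁻¹]·exp(Fx)·[I; 0]` is twice
differentiable and solves `q·ϑ'' = ϑ·A_z`, `ϑ(0) = 0`, `ϑ(1) = −C_z`. -/
theorem stmt4
    (m : ℕ) (hm : 1 ≤ m)
    (Az : Matrix (Fin m) (Fin m) ℝ) (Cz : Fin m → ℝ)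
    (q : ℝ) (hq : q ≠ 0)
    (hG : IsUnit (Gblock m q Az).det)
    (ϑ : ℝ → Fin m → ℝ)
    (hϑ : ϑ = thetaKernel m q Az (-(Cz ᵥ* (Gblock m q Az)⁻¹))) :
    (Differentiable ℝ ϑ ∧ Differentiable ℝ (deriv ϑ))
    ∧ (∀ x : ℝ, q • deriv (deriv ϑ) x = ϑ x ᵥ* Az)
    ∧ ϑ 0 = 0
    ∧ ϑ 1 = -Cz := by
  set F := Fblock m q Az with hF
  set v : Fin m → ℝ := -(Cz ᵥ* (Gblock m q Az)⁻¹) with hv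
  set w : Fin m ⊕ Fin m → ℝ := Sum.elim (0 : Fin m → ℝ) v with hw
  set T₀ := rowMapAux m w with hT₀
  set T₁ := T₀ ∘ₗ LinearMap.mulRight ℝ F with hT₁
  have hϑ' : ϑ = fun t : ℝ => T₀ (NormedSpace.exp (t • F)) := by
    rw [hϑ]; rfl
  have hd0 : ∀ x : ℝ, HasDerivAt ϑ (T₀ (NormedSpace.exp (x • F) * F)) x := by
    intro x; rw [hϑ']; exact keyDeriv m F T₀ x
  have hderiv1 : deriv ϑ = fun t : ℝ => T₁ (NormedSpace.exp (t • F)) := by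
    funext x
    exact (hd0 x).deriv
  have hd1 : ∀ x : ℝ, HasDerivAt (deriv ϑ) (T₁ (NormedSpace.exp (x • F) * F)) x := by
    intro x; rw [hderiv1]; exact keyDeriv m F T₁ x
  have hderiv2 : ∀ x : ℝ, deriv (deriv ϑ) x = T₀ (NormedSpace.exp (x • F) * F * F) := by
    intro x
    rw [(hd1 x).deriv]
    rfl
  refine ⟨⟨fun x => (hd0 x).differentiableAt, fun x => (hd1 x).differentiableAt⟩, ?_, ?_, ?_⟩
  · -- the ODE
    intro x
    rw [hderiv2 x, mul_assoc]
    have hFF : F * F = Matrix.fromBlocks (q⁻¹ • Az) 0 0 (q⁻¹ • Az) := by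
      rw [hF]
      simp [Fblock, Matrix.fromBlocks_multiply]
    rw [hFF]
    funext j
    show q * (T₀ (NormedSpace.exp (x • F) * Matrix.fromBlocks (q⁻¹ • Az) 0 0 (q⁻¹ • Az))) j
        = (ϑ x ᵥ* Az) j
    rw [hT₀, hϑ']
    simp only [rowMapAux, LinearMap.coe_mk, AddHom.coe_mk, ← Matrix.vecMul_vecMul]
    set u := w ᵥ* NormedSpace.exp (x • F) with hu
    simp [Matrix.vecMul, dotProduct, Fintype.sum_sum_type, thetaKernel,
      Finset.mul_sum, mul_left_comm, smul_eq_mul, mul_assoc, mul_inv_cancel₀ hq,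
      ← mul_assoc, mul_comm q q⁻¹, inv_mul_cancel₀ hq]
    rfl
  · -- ϑ 0 = 0
    rw [hϑ']
    funext j
    simp [hT₀, rowMapAux, Matrix.vecMul, dotProduct, Fintype.sum_sum_type, hw,
      NormedSpace.exp_zero, Matrix.one_apply]
  · -- ϑ 1 = -Cz
    rw [hϑ']
    funext j
    have hGapp : ∀ i, NormedSpace.exp F (Sum.inr i) (Sum.inl j) = Gblock m q Az i j := by
      intro i; rfl
    show (w ᵥ* NormedSpace.exp ((1:ℝ) • F)) (Sum.inl j) = (-Cz) j
    rw [one_smul]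
    have : (w ᵥ* NormedSpace.exp F) (Sum.inl j) = (v ᵥ* Gblock m q Az) j := by
      simp [Matrix.vecMul, dotProduct, Fintype.sum_sum_type, hw, hGapp]
    rw [this, hv]
    have := Matrix.nonsing_inv_mul (Gblock m q Az) hG
    rw [Matrix.neg_vecMul, Matrix.vecMul_vecMul, this, Matrix.vecMul_one]
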